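/- Let γ, β be continuous with β ≥ 0, γ(t) < 0 for large t, ∫₀ᵗ γ(ξ)dξ → −∞ as t → ∞, and β(t)/γ(t) → 0 as t → ∞. Let ν(t) = exp(−∫₀ᵗ γ). Then (∫₀ᵗ β(ξ)ν(ξ)dξ)/ν(t) → 0 as t → ∞. -/

import Mathlib

open MeasureTheory intervalIntegral Real Filter

theorem lhospital_limit_thm27
    (γ β ν : ℝ → ℝ)
    (hγ : Continuous γ) (hβ : Continuous β) (hβpos : ∀ t, 0 ≤ β t)
    (hγneg : ∃ T, ∀ t ≥ T, γ t < 0)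
    (hγint : Tendsto (fun t => ∫ ξ in (0:ℝ)..t, γ ξ) atTop atBot)
    (hβγ : Tendsto (fun t => β t / γ t) atTop (nhds 0))
    (hν : ∀ t, ν t = Real.exp (-∫ ξ in (0:ℝ)..t, γ ξ)) :
    Tendsto (fun t => (∫ ξ in (0:ℝ)..t, β ξ * ν ξ) / ν t) atTop (nhds 0) := by
  have hνpos : ∀ t, 0 < ν t := fun t => (hν t).symm ▸ Real.exp_pos _
  have hIcont : Continuous (fun t => ∫ ξ in (0:ℝ)..t, γ ξ) :=
    intervalIntegral.continuous_primitive (fun a b => hγ.intervalIntegrable a b) 0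
  have hνcont : Continuous ν := by
    have : Continuous (fun t => Real.exp (-∫ ξ in (0:ℝ)..t, γ ξ)) :=
      Real.continuous_exp.comp hIcont.neg
    exact this.congr (fun t => (hν t).symm)
  have hνtop : Tendsto ν atTop atTop := by
    have : Tendsto (fun t => Real.exp (-∫ ξ in (0:ℝ)..t, γ ξ)) atTop atTop :=
      Real.tendsto_exp_atTop.comp (tendsto_neg_atBot_atTop.comp hγint)
    exact this.congr (fun t => (hν t).symm)
  have hν' : ∀ t, HasDerivAt ν (-γ t * ν t) t := by
    intro t
    have h1 : HasDerivAt (fun t => ∫ ξ in (0:ℝ)..t, γ ξ) (γ t) t :=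
      intervalIntegral.integral_hasDerivAt_right (hγ.intervalIntegrable _ _)
        (hγ.stronglyMeasurableAtFilter _ _) hγ.continuousAt
    have h2 := (h1.neg).exp
    have h3 : HasDerivAt (fun x => Real.exp (-∫ ξ in (0:ℝ)..x, γ ξ)) (-γ t * ν t) t := by
      convert h2 using 1
      · rfl
      rw [hν t, Pi.neg_apply]; ring
    exact h3.congr_of_eventuallyEq (Filter.Eventually.of_forall (fun x => hν x))
  have hβν_int : ∀ a b : ℝ, IntervalIntegrable (fun ξ => β ξ * ν ξ) volume a b :=
    fun a b => (hβ.mul hνcont).intervalIntegrable a b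
  have hγν_int : ∀ a b : ℝ, IntervalIntegrable (fun ξ => -γ ξ * ν ξ) volume a b :=
    fun a b => ((hγ.neg).mul hνcont).intervalIntegrable a b
  have hFTC : ∀ a b : ℝ, (∫ ξ in a..b, -γ ξ * ν ξ) = ν b - ν a := by
    intro a b
    exact intervalIntegral.integral_eq_sub_of_hasDerivAt (fun x _ => hν' x) (hγν_int a b)
  rw [NormedAddCommGroup.tendsto_nhds_zero]
  intro ε hε
  obtain ⟨T1, hT1⟩ := hγneg
  have hε3 : (0:ℝ) < ε / 3 := by positivity
  obtain ⟨T2, hT2⟩ := (Metric.tendsto_atTop.mp hβγ (ε / 3) hε3)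
  set T := max T1 T2 with hT
  set C := ∫ ξ in (0:ℝ)..T, β ξ * ν ξ with hC
  have hCdiv : Tendsto (fun t => C / ν t) atTop (nhds 0) :=
    Tendsto.div_atTop tendsto_const_nhds hνtop
  have hCev : ∀ᶠ t in atTop, |C / ν t| < ε / 3 := by
    have := Metric.tendsto_nhds.mp hCdiv (ε / 3) hε3
    simpa [Real.dist_eq, abs_div] using this
  filter_upwards [hCev, eventually_ge_atTop T, eventually_ge_atTop (0:ℝ)]
    with t hCt hTt h0t
  -- key pointwise bound on [T, t]
  have hkey : (∫ ξ in T..t, β ξ * ν ξ) ≤ ε / 3 * (ν t - ν T) := by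
    have hmono : (∫ ξ in T..t, β ξ * ν ξ) ≤ ∫ ξ in T..t, ε / 3 * (-γ ξ * ν ξ) := by
      apply intervalIntegral.integral_mono_on hTt (hβν_int T t)
        ((hγν_int T t).const_mul (ε / 3))
      intro x hx
      have hxT1 : T1 ≤ x := le_trans (le_max_left _ _) hx.1
      have hxT2 : T2 ≤ x := le_trans (le_max_right _ _) hx.1
      have hγx : γ x < 0 := hT1 x hxT1
      have hγne : γ x ≠ 0 := ne_of_lt hγx
      have hdist := hT2 x hxT2
      rw [Real.dist_eq, sub_zero] at hdist
      have hβle : β x ≤ ε / 3 * (-γ x) := by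
        have h1 : β x / γ x > -(ε / 3) := neg_lt_of_abs_lt hdist
        have h2 : (β x / γ x) * γ x > 0 → True := fun _ => trivial
        nlinarith [div_mul_cancel₀ (β x) hγne]
      have := mul_le_mul_of_nonneg_right hβle (le_of_lt (hνpos x))
      linarith [this]
    rwa [intervalIntegral.integral_const_mul, hFTC T t] at hmono
  have hsplit : (∫ ξ in (0:ℝ)..t, β ξ * ν ξ) = C + ∫ ξ in T..t, β ξ * ν ξ := by
    rw [hC]
    exact (intervalIntegral.integral_add_adjacent_intervals (hβν_int 0 T) (hβν_int T t)).symm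
  have hQnn : 0 ≤ (∫ ξ in (0:ℝ)..t, β ξ * ν ξ) / ν t := by
    apply div_nonneg _ (le_of_lt (hνpos t))
    apply intervalIntegral.integral_nonneg h0t
    intro x _
    exact mul_nonneg (hβpos x) (le_of_lt (hνpos x))
  rw [Real.norm_eq_abs, abs_of_nonneg hQnn]
  have hνt := hνpos t
  have hνT := hνpos T
  have hbound : (∫ ξ in (0:ℝ)..t, β ξ * ν ξ) / ν t ≤ C / ν t + ε / 3 := by
    rw [hsplit, add_div]
    have : (∫ ξ in T..t, β ξ * ν ξ) / ν t ≤ ε / 3 := by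
      rw [div_le_iff₀ hνt]
      nlinarith [hkey, hνT]
    linarith
  have : C / ν t < ε / 3 := lt_of_le_of_lt (le_abs_self _) hCt
  linarith
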